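/- Let ρ and σ be faithful states of M, ω_N a faithful state of N, t ∈ ℝ, and set ω := R_ρ(ω_N) = ρ^{1/2} ρ_N^{−1/2} ω_N ρ_N^{−1/2} ρ^{1/2}. Then ‖ρ − R_σ^{−t}(ρ_N)‖₁ ≤ 2 ‖ρ^{1/2} − σ^{1/2+it} σ_N^{−1/2−it} ρ_N^{1/2} ω_N^{1/2+it} ρ_N^{−1/2} ρ^{1/2} ω^{−1/2−it}‖₂. -/

import Mathlib

open scoped ComplexOrder
open MeasureTheory Matrix

namespace QFDiv

/-- `Mat n` is the matrix algebra `Mₙ(ℂ)`. -/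
abbrev Mat (n : ℕ) := Matrix (Fin n) (Fin n) ℂ

/-- Hilbert–Schmidt inner product `⟨x, y⟩ = tr(x* y)`. -/
noncomputable def hsInner {n : ℕ} (x y : Mat n) : ℂ := (xᴴ * y).trace

/-- Hilbert–Schmidt norm `‖x‖₂ = tr(x* x)^{1/2}`. -/
noncomputable def hsNorm {n : ℕ} (x : Mat n) : ℝ := Real.sqrt ((xᴴ * x).trace.re)

/-- Trace norm `‖x‖₁ = tr((x* x)^{1/2})`. -/
noncomputable def traceNorm {n : ℕ} (x : Mat n) : ℝ :=
  (((Matrix.posSemidef_conjTranspose_mul_self x).1.eigenvectorUnitary : Mat n) *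
    Matrix.diagonal (fun i => ((Real.sqrt ((Matrix.posSemidef_conjTranspose_mul_self x).1.eigenvalues i) : ℝ) : ℂ)) *
    star ((Matrix.posSemidef_conjTranspose_mul_self x).1.eigenvectorUnitary : Mat n)).trace.re

/-- Operator norm `‖x‖_∞` (as an operator on the Euclidean space `ℂⁿ`). -/
noncomputable def opNorm {n : ℕ} (x : Mat n) : ℝ :=
  ‖Matrix.toEuclideanCLM (𝕜 := ℂ) x‖

/-- Complex matrix power `A^z := exp(z · log A)` for Hermitian (in particular positive
definite) `A`, defined by the spectral functional calculus; junk value `0` otherwise. -/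
noncomputable def mpow {n : ℕ} (A : Mat n) (z : ℂ) : Mat n :=
  if h : A.IsHermitian then
    (h.eigenvectorUnitary : Mat n) *
      Matrix.diagonal (fun i => (h.eigenvalues i : ℂ) ^ z) *
      star (h.eigenvectorUnitary : Mat n)
  else 0

/-- Matrix logarithm via the spectral functional calculus. -/
noncomputable def mlog {n : ℕ} (A : Mat n) : Mat n :=
  if h : A.IsHermitian then
    (h.eigenvectorUnitary : Mat n) *
      Matrix.diagonal (fun i => (Real.log (h.eigenvalues i) : ℂ)) *
      star (h.eigenvectorUnitary : Mat n)
  else 0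

/-- `f(Δ(σ,ω))(x)`, where `Δ(σ,ω) : y ↦ σ y ω⁻¹` is the relative modular operator on the
Hilbert–Schmidt space and `f(Δ(σ,ω))` is its functional calculus:  writing `σ = U diag(s) U*`
and `ω = V diag(w) V*`, the operator `Δ(σ,ω)` has orthonormal eigenvectors `U Eᵢⱼ V*` with
eigenvalues `sᵢ/wⱼ`, so `f(Δ(σ,ω))(x) = U (f(sᵢ/wⱼ) ⊙ (U* x V)) V*`. -/
noncomputable def modApply {n : ℕ} (f : ℝ → ℝ) (σ ω : Mat n) (x : Mat n) : Mat n :=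
  if hσ : σ.IsHermitian then
    if hω : ω.IsHermitian then
      (hσ.eigenvectorUnitary : Mat n) *
        Matrix.of (fun i j =>
          (f (hσ.eigenvalues i / hω.eigenvalues j) : ℂ) *
            ((star (hσ.eigenvectorUnitary : Mat n) * x * (hω.eigenvectorUnitary : Mat n)) i j)) *
        star (hω.eigenvectorUnitary : Mat n)
    else 0
  else 0

/-- Standard `f`-divergence `Q_f(ρ‖σ) = ⟨ρ^{1/2}, f(Δ(σ,ρ))(ρ^{1/2})⟩`. -/
noncomputable def Qf {n : ℕ} (f : ℝ → ℝ) (ρ σ : Mat n) : ℝ :=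
  (hsInner (mpow ρ (1/2)) (modApply f σ ρ (mpow ρ (1/2)))).re

/-- Optimized `f`-divergence `Q̃_f(ρ‖σ) = sup_ω ⟨ρ^{1/2}, f(Δ(σ,ω))(ρ^{1/2})⟩`, where the
supremum runs over all faithful states `ω` of `Mₙ(ℂ)`. -/
noncomputable def Qopt {n : ℕ} (f : ℝ → ℝ) (ρ σ : Mat n) : ℝ :=
  ⨆ ω : {ω : Mat n // ω.PosDef ∧ ω.trace = 1},
    (hsInner (mpow ρ (1/2)) (modApply f σ ω.1 (mpow ρ (1/2)))).re

/-- Optimized `f`-divergence on the subalgebra `N`: the supremum runs over the faithful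
states `ω` of `N`. -/
noncomputable def QoptN {n : ℕ} (f : ℝ → ℝ) (N : StarSubalgebra ℂ (Mat n)) (ρ σ : Mat n) : ℝ :=
  ⨆ ω : {ω : Mat n // ω ∈ N ∧ ω.PosDef ∧ ω.trace = 1},
    (hsInner (mpow ρ (1/2)) (modApply f σ ω.1 (mpow ρ (1/2)))).re

/-- Umegaki relative entropy `D(ρ‖σ) = tr(ρ (log ρ − log σ))`. -/
noncomputable def relEnt {n : ℕ} (ρ σ : Mat n) : ℝ := ((ρ * (mlog ρ - mlog σ)).trace).re

/-- `Q_{x²}(ρ‖σ) = tr(ρ⁻¹ σ²)`. -/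
noncomputable def Qsq {n : ℕ} (ρ σ : Mat n) : ℝ := ((ρ⁻¹ * (σ * σ)).trace).re

/-- `Q_{x⁻¹}(ρ‖σ) = tr(ρ² σ⁻¹)`. -/
noncomputable def Qxinv {n : ℕ} (ρ σ : Mat n) : ℝ := ((ρ * ρ * σ⁻¹).trace).re

/-- Petz–Rényi relative quasi-entropy `Q_s(ρ‖σ) = tr(ρ^{1−s} σ^s)`. -/
noncomputable def Qs {n : ℕ} (s : ℝ) (ρ σ : Mat n) : ℝ :=
  ((mpow ρ (1 - (s : ℂ)) * mpow σ (s : ℂ)).trace).re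

/-- Petz–Rényi relative entropy `D_α(ρ‖σ) = (α−1)⁻¹ log tr(ρ^α σ^{1−α})`. -/
noncomputable def petzRenyi {n : ℕ} (α : ℝ) (ρ σ : Mat n) : ℝ :=
  (α - 1)⁻¹ * Real.log (((mpow ρ (α : ℂ) * mpow σ (1 - (α : ℂ))).trace).re)

/-- Sandwiched Rényi relative quasi-entropy
`Q̃_α(ρ‖σ) = (tr[(ρ^{1/2} σ^{−1/α'} ρ^{1/2})^α])^{1/α}` with `α' = α/(α−1)`,
so that `−1/α' = (1−α)/α`. -/
noncomputable def sandQ {n : ℕ} (α : ℝ) (ρ σ : Mat n) : ℝ :=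
  (((mpow (mpow ρ (1/2) * mpow σ (((1 - α)/α : ℝ) : ℂ) * mpow ρ (1/2)) (α : ℂ)).trace).re)
    ^ (1/α)

/-- Sandwiched Rényi relative entropy `D̃_α(ρ‖σ) = α' log Q̃_α(ρ‖σ)`. -/
noncomputable def sandD {n : ℕ} (α : ℝ) (ρ σ : Mat n) : ℝ :=
  (α/(α-1)) * Real.log (sandQ α ρ σ)

/-- Rotated Petz recovery map
`R_ρ^t(x) = ρ^{1/2−it} ρ_N^{−1/2+it} x ρ_N^{−1/2−it} ρ^{1/2+it}` (here `ρN` is the matrix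
`ρ_N = E(ρ)`). -/
noncomputable def rotPetz {n : ℕ} (ρ ρN : Mat n) (t : ℝ) (x : Mat n) : Mat n :=
  mpow ρ (1/2 - Complex.I * t) * mpow ρN (-(1/2) + Complex.I * t) * x *
    mpow ρN (-(1/2) - Complex.I * t) * mpow ρ (1/2 + Complex.I * t)

/-- The probability measure `dβ(t) = (π/2)(cosh(πt)+1)⁻¹ dt` on `ℝ`. -/
noncomputable def betaMeasure : Measure ℝ :=
  volume.withDensity fun t => ENNReal.ofReal (Real.pi / 2 * (Real.cosh (Real.pi * t) + 1)⁻¹)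

/-- Universal Petz recovery map `R_ρ^u(x) = ∫_ℝ R_ρ^{t/2}(x) dβ(t)` (Bochner integral,
computed entrywise). -/
noncomputable def univPetz {n : ℕ} (ρ ρN : Mat n) (x : Mat n) : Mat n :=
  Matrix.of fun i j => ∫ t : ℝ, rotPetz ρ ρN (t/2) x i j ∂betaMeasure

/-- `E` is the trace-preserving conditional expectation onto the subalgebra `N`, i.e. the
orthogonal projection of `Mₙ(ℂ)` onto `N` for the Hilbert–Schmidt inner product. -/
def IsCondExp {n : ℕ} (N : StarSubalgebra ℂ (Mat n)) (E : Mat n →ₗ[ℂ] Mat n) : Prop :=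
  (∀ x, E x ∈ N) ∧ (∀ x ∈ N, E x = x) ∧ (∀ x y, hsInner (E x) y = hsInner x (E y))

/-- `f` admits the integral representation
`f(x) = a + b x + ∫₀^∞ (1/(λ+x) − λ/(λ²+1)) dν(λ)` for `x > 0`, with `b ≥ 0` and
`∫ λ/(λ²+1) dν(λ) < ∞`. -/
def HasIntRep (f : ℝ → ℝ) (a b : ℝ) (ν : Measure ℝ) : Prop :=
  0 ≤ b ∧
  (∫⁻ l in Set.Ioi (0:ℝ), ENNReal.ofReal (l / (l^2 + 1)) ∂ν) < ⊤ ∧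
  ∀ x : ℝ, 0 < x →
    IntegrableOn (fun l => 1/(l + x) - l/(l^2 + 1)) (Set.Ioi 0) ν ∧
    f x = a + b*x + ∫ l in Set.Ioi (0:ℝ), (1/(l + x) - l/(l^2 + 1)) ∂ν


open Polynomial in
private theorem _dummy : True := trivial

open Polynomial

/-- functional calculus for Hermitian matrices -/
noncomputable def fc (f : ℝ → ℂ) (A : Mat n) : Mat n :=
  if h : A.IsHermitian then
    (h.eigenvectorUnitary : Mat n) *
      Matrix.diagonal (fun i => f (h.eigenvalues i)) *
      star (h.eigenvectorUnitary : Mat n)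
  else 0

lemma fc_def {A : Mat n} (h : A.IsHermitian) (f : ℝ → ℂ) :
    fc f A = (h.eigenvectorUnitary : Mat n) *
      Matrix.diagonal (fun i => f (h.eigenvalues i)) *
      star (h.eigenvectorUnitary : Mat n) := dif_pos h

lemma U_mul_star {A : Mat n} (h : A.IsHermitian) :
    (h.eigenvectorUnitary : Mat n) * star (h.eigenvectorUnitary : Mat n) = 1 :=
  (Matrix.mem_unitaryGroup_iff).mp (h.eigenvectorUnitary).2

lemma star_mul_U {A : Mat n} (h : A.IsHermitian) :
    star (h.eigenvectorUnitary : Mat n) * (h.eigenvectorUnitary : Mat n) = 1 :=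
  (Matrix.mem_unitaryGroup_iff').mp (h.eigenvectorUnitary).2

lemma conj_mul_conj {U X Y : Mat n} (hU2 : star U * U = 1) :
    (U * X * star U) * (U * Y * star U) = U * (X * Y) * star U := by
  simp only [Matrix.mul_assoc]
  rw [← Matrix.mul_assoc (star U) U (Y * star U), hU2, Matrix.one_mul]

lemma fc_mul {A : Mat n} (h : A.IsHermitian) (f g : ℝ → ℂ) :
    fc f A * fc g A = fc (fun x => f x * g x) A := by
  rw [fc_def h, fc_def h, fc_def h, conj_mul_conj (star_mul_U h), Matrix.diagonal_mul_diagonal]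

lemma fc_conjT {A : Mat n} (h : A.IsHermitian) (f : ℝ → ℂ) :
    (fc f A)ᴴ = fc (fun x => star (f x)) A := by
  rw [fc_def h, fc_def h, ← Matrix.star_eq_conjTranspose]
  simp only [StarMul.star_mul, star_star, Matrix.star_eq_conjTranspose,
    Matrix.diagonal_conjTranspose, Matrix.mul_assoc, Matrix.conjTranspose_conjTranspose]
  rfl

lemma fc_trace {A : Mat n} (h : A.IsHermitian) (f : ℝ → ℂ) :
    (fc f A).trace = ∑ i, f (h.eigenvalues i) := by
  rw [fc_def h, Matrix.trace_mul_comm, ← Matrix.mul_assoc, star_mul_U h, Matrix.one_mul,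
    Matrix.trace_diagonal]

lemma fc_one {A : Mat n} (h : A.IsHermitian) : fc (fun _ => 1) A = 1 := by
  rw [fc_def h]
  simp [Matrix.diagonal_one, U_mul_star h]

lemma fc_id {A : Mat n} (h : A.IsHermitian) : fc (fun x => (x : ℂ)) A = A := by
  rw [fc_def h]
  exact (h.spectral_theorem).symm

lemma aeval_conj (U D : Mat n) (hU1 : U * star U = 1) (hU2 : star U * U = 1) (q : ℂ[X]) :
    Polynomial.aeval (U * D * star U) q = U * Polynomial.aeval D q * star U := by
  let φ : Mat n →ₐ[ℂ] Mat n :=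
    { toFun := fun x => U * x * star U
      map_one' := by show U * 1 * star U = 1; rw [Matrix.mul_one, hU1]
      map_mul' := by
        intro x y
        show U * (x * y) * star U = (U * x * star U) * (U * y * star U)
        rw [conj_mul_conj hU2]
      map_zero' := by simp
      map_add' := by intro x y; simp [Matrix.add_mul, Matrix.mul_add]
      commutes' := by
        intro r
        show U * (algebraMap ℂ (Mat n) r) * star U = algebraMap ℂ (Mat n) r
        simp only [Algebra.algebraMap_eq_smul_one, Matrix.mul_smul, Matrix.smul_mul,
          Matrix.mul_one, hU1] }
  have h0 := Polynomial.aeval_algHom_apply φ D q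
  simp only [φ, AlgHom.coe_mk, RingHom.coe_mk, MonoidHom.coe_mk, OneHom.coe_mk] at h0
  exact h0

lemma aeval_diagonal (d : Fin n → ℂ) (q : ℂ[X]) :
    Polynomial.aeval (Matrix.diagonal d) q = Matrix.diagonal (fun i => q.eval (d i)) := by
  have h1 := Polynomial.aeval_algHom_apply (Matrix.diagonalAlgHom (n := Fin n) (α := ℂ) ℂ) d q
  simp only [Matrix.diagonalAlgHom_apply] at h1
  rw [h1]
  apply congrArg Matrix.diagonal
  funext i
  have h2 := Polynomial.aeval_algHom_apply (Pi.evalAlgHom ℂ (fun _ => ℂ) i) d q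
  simp only [Pi.evalAlgHom_apply] at h2
  rw [← h2]
  exact congrFun (Polynomial.coe_aeval_eq_eval (d i)) q

lemma fc_eq_aeval {A : Mat n} (h : A.IsHermitian) (f : ℝ → ℂ) :
    ∃ q : ℂ[X], fc f A = Polynomial.aeval A q := by
  classical
  set s : Finset ℝ := Finset.image h.eigenvalues Finset.univ with hs
  have hinj : Set.InjOn (fun x : ℝ => (x : ℂ)) ↑s := fun a _ b _ hab =>
    Complex.ofReal_inj.mp hab
  refine ⟨Lagrange.interpolate s (fun x : ℝ => (x : ℂ)) f, ?_⟩
  have heval : ∀ i, (Lagrange.interpolate s (fun x : ℝ => (x : ℂ)) f).eval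
      ((h.eigenvalues i : ℂ)) = f (h.eigenvalues i) := by
    intro i
    exact Lagrange.eval_interpolate_at_node f hinj (by simp [hs])
  conv_rhs => rw [h.spectral_theorem, Unitary.conjStarAlgAut_apply]
  rw [aeval_conj _ _ (U_mul_star h) (star_mul_U h), aeval_diagonal, fc_def h]
  have hd : (Matrix.diagonal (fun i => f (h.eigenvalues i)) : Mat n)
      = Matrix.diagonal (fun i => (Lagrange.interpolate s (fun x : ℝ => (x:ℂ)) f).eval
          ((RCLike.ofReal ∘ h.eigenvalues) i)) := by
    apply congrArg Matrix.diagonal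
    funext i
    exact (heval i).symm
  rw [hd]

lemma fc_mem {A : Mat n} (h : A.IsHermitian) {S : StarSubalgebra ℂ (Mat n)}
    (hA : A ∈ S) (f : ℝ → ℂ) : fc f A ∈ S := by
  obtain ⟨q, hq⟩ := fc_eq_aeval h f
  rw [hq]
  have : A ∈ S.toSubalgebra := hA
  have h2 := Polynomial.coe_aeval_mk_apply (S := S.toSubalgebra) (x := A) (p := q) this
  rw [← h2]
  exact (Polynomial.aeval (⟨A, this⟩ : S.toSubalgebra) q).2


lemma fc_congr {A : Mat n} (h : A.IsHermitian) {f g : ℝ → ℂ}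
    (hfg : ∀ i, f (h.eigenvalues i) = g (h.eigenvalues i)) : fc f A = fc g A := by
  rw [fc_def h, fc_def h]
  congr 1
  congr 1
  exact congrArg Matrix.diagonal (funext hfg)

lemma mpow_eq_fc (A : Mat n) (z : ℂ) : mpow A z = fc (fun x => (x : ℂ) ^ z) A := rfl

lemma cpow_conj_of_pos {x : ℝ} (hx : 0 < x) (z : ℂ) :
    star ((x : ℂ) ^ z) = (x : ℂ) ^ (star z) := by
  have hx0 : (x : ℂ) ≠ 0 := Complex.ofReal_ne_zero.mpr hx.ne'
  simp only [Complex.cpow_def_of_ne_zero hx0]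
  rw [Complex.star_def, ← Complex.exp_conj, _root_.map_mul, ← Complex.ofReal_log hx.le,
    Complex.conj_ofReal]

lemma mpow_add {A : Mat n} (hA : A.PosDef) (z w : ℂ) :
    mpow A (z + w) = mpow A z * mpow A w := by
  rw [mpow_eq_fc, mpow_eq_fc, mpow_eq_fc, fc_mul hA.1]
  exact fc_congr hA.1 fun i =>
    Complex.cpow_add _ _ (Complex.ofReal_ne_zero.mpr (hA.eigenvalues_pos i).ne')

lemma mpow_zero {A : Mat n} (hA : A.IsHermitian) : mpow A 0 = 1 := by
  rw [mpow_eq_fc, show fc (fun x => (x:ℂ) ^ (0:ℂ)) A = fc (fun _ => 1) A from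
    fc_congr hA fun i => Complex.cpow_zero _, fc_one hA]

lemma mpow_one {A : Mat n} (hA : A.IsHermitian) : mpow A 1 = A := by
  rw [mpow_eq_fc, show fc (fun x => (x:ℂ) ^ (1:ℂ)) A = fc (fun x => (x:ℂ)) A from
    fc_congr hA fun i => Complex.cpow_one _, fc_id hA]

lemma mpow_conjT {A : Mat n} (hA : A.PosDef) (z : ℂ) :
    (mpow A z)ᴴ = mpow A (star z) := by
  rw [mpow_eq_fc, mpow_eq_fc, fc_conjT hA.1]
  exact fc_congr hA.1 fun i => cpow_conj_of_pos (hA.eigenvalues_pos i) z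

lemma mpow_mul_mpow_neg {A : Mat n} (hA : A.PosDef) (z : ℂ) :
    mpow A z * mpow A (-z) = 1 := by
  rw [← mpow_add hA, add_neg_cancel, mpow_zero hA.1]

lemma isUnit_mpow {A : Mat n} (hA : A.PosDef) (z : ℂ) : IsUnit (mpow A z) :=
  ⟨⟨mpow A z, mpow A (-z), mpow_mul_mpow_neg hA z, by
      have := mpow_mul_mpow_neg hA (-z); rwa [neg_neg] at this⟩, rfl⟩

lemma inv_mpow {A : Mat n} (hA : A.PosDef) (z : ℂ) : (mpow A z)⁻¹ = mpow A (-z) :=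
  Matrix.inv_eq_right_inv (mpow_mul_mpow_neg hA z)

lemma mpow_neg_one {A : Mat n} (hA : A.PosDef) : mpow A (-1) = A⁻¹ := by
  rw [← inv_mpow hA 1, mpow_one hA.1]

lemma posDef_conj {A : Mat n} (hA : A.PosDef) {C : Mat n} (hC : IsUnit C) :
    (C * A * Cᴴ).PosDef := by
  constructor
  · show (C * A * Cᴴ)ᴴ = C * A * Cᴴ
    simp [Matrix.conjTranspose_mul, Matrix.mul_assoc, hA.1.eq]
  · exact (hA.mul_mul_conjTranspose_same (Matrix.vecMul_injective_iff_isUnit.mpr hC)).2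

lemma posDef_of_eigenvalues_pos {A : Mat n} (h : A.IsHermitian)
    (hpos : ∀ i, 0 < h.eigenvalues i) : A.PosDef := by
  rw [h.spectral_theorem]
  have hdiag : (Matrix.diagonal (RCLike.ofReal ∘ h.eigenvalues) : Mat n).PosDef := by
    rw [Matrix.posDef_diagonal_iff]
    intro i
    simp only [Function.comp_apply]
    exact Complex.zero_lt_real.mpr (hpos i)
  have hU : IsUnit (h.eigenvectorUnitary : Mat n) :=
    ⟨⟨_, star (h.eigenvectorUnitary : Mat n),
      (Matrix.mem_unitaryGroup_iff).mp (h.eigenvectorUnitary).2,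
      (Matrix.mem_unitaryGroup_iff').mp (h.eigenvectorUnitary).2⟩, rfl⟩
  have := posDef_conj hdiag hU
  rwa [← Matrix.star_eq_conjTranspose] at this


/-- matrices as Euclidean vectors -/
noncomputable def toE (x : Mat n) : EuclideanSpace ℂ (Fin n × Fin n) :=
  WithLp.toLp 2 (fun p : Fin n × Fin n => x p.1 p.2)

lemma hsInner_eq_inner (x y : Mat n) :
    hsInner x y = inner ℂ (toE x) (toE y) := by
  have hR : (inner ℂ (toE x) (toE y) : ℂ) = ∑ p : Fin n × Fin n, star (x p.1 p.2) * y p.1 p.2 := by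
    rw [PiLp.inner_apply]
    set_option maxRecDepth 4000 in
    simp only [RCLike.inner_apply, starRingEnd_apply]
    exact Finset.sum_congr rfl fun p _ => mul_comm _ _
  have hL : hsInner x y = ∑ i, ∑ j, star (x j i) * y j i := by
    simp [hsInner, Matrix.trace, Matrix.diag, Matrix.mul_apply, Matrix.conjTranspose_apply]
  rw [hL, Finset.sum_comm, hR, Fintype.sum_prod_type]

lemma hsNorm_eq_norm (x : Mat n) : hsNorm x = ‖toE x‖ := by
  have h1 : ((xᴴ * x).trace) = hsInner x x := rfl
  rw [hsNorm, h1, hsInner_eq_inner]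
  rw [show (inner ℂ (toE x) (toE x) : ℂ).re = RCLike.re (inner ℂ (toE x) (toE x) : ℂ) from rfl]
  rw [inner_self_eq_norm_sq (𝕜 := ℂ)]
  exact Real.sqrt_sq (norm_nonneg _)

lemma norm_hsInner_le (x y : Mat n) : ‖hsInner x y‖ ≤ hsNorm x * hsNorm y := by
  rw [hsInner_eq_inner, hsNorm_eq_norm, hsNorm_eq_norm]
  exact norm_inner_le_norm (𝕜 := ℂ) _ _

lemma hsNorm_nonneg (x : Mat n) : 0 ≤ hsNorm x := Real.sqrt_nonneg _

lemma hsNorm_isometry {M : Mat n} (hM : Mᴴ * M = 1) (x : Mat n) :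
    hsNorm (M * x) = hsNorm x := by
  rw [hsNorm, hsNorm, Matrix.conjTranspose_mul]
  rw [show xᴴ * Mᴴ * (M * x) = xᴴ * (Mᴴ * M) * x by simp [Matrix.mul_assoc], hM, Matrix.mul_one]

lemma trace_mul_conjT_eq_hsInner (X Y : Mat n) : (X * Yᴴ).trace = hsInner Y X := by
  rw [Matrix.trace_mul_comm]; rfl

/-- sign function -/
noncomputable def sgn (x : ℝ) : ℂ := if x < 0 then -1 else 1

lemma sgn_mul_self (x : ℝ) : star (sgn x) * sgn x = 1 := by
  unfold sgn; split <;> simp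

lemma sgn_mul_id (x : ℝ) : sgn x * (x : ℂ) = (|x| : ℝ) := by
  unfold sgn
  split_ifs with h
  · rw [abs_of_neg h]; push_cast; ring
  · rw [abs_of_nonneg (not_lt.mp h)]; ring

open scoped MatrixOrder in
lemma traceNorm_herm {C : Mat n} (hC : C.IsHermitian) :
    traceNorm C = ((fc sgn C * C).trace).re ∧ (fc sgn C)ᴴ * fc sgn C = 1 := by
  have habs_psd : (fc (fun x => ((|x| : ℝ) : ℂ)) C).PosSemidef := by
    rw [fc_def hC]
    have hd : (Matrix.diagonal (fun i => ((|hC.eigenvalues i| : ℝ) : ℂ)) : Mat n).PosSemidef := by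
      rw [Matrix.posSemidef_diagonal_iff]
      intro i
      exact_mod_cast abs_nonneg _
    have := hd.mul_mul_conjTranspose_same (hC.eigenvectorUnitary : Mat n)
    rwa [← Matrix.star_eq_conjTranspose] at this
  have hsq : (fc (fun x => ((|x| : ℝ) : ℂ)) C) ^ 2 = Cᴴ * C := by
    rw [pow_two, fc_mul hC, hC.eq]
    nth_rewrite 3 [← fc_id hC]
    nth_rewrite 2 [← fc_id hC]
    rw [fc_mul hC]
    exact fc_congr hC fun i => by
      rw [← Complex.ofReal_mul, ← Complex.ofReal_mul, abs_mul_abs_self]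
  have hsqrt : fc (fun x => ((|x| : ℝ) : ℂ)) C = CFC.sqrt (Cᴴ * C) :=
    (CFC.sqrt_unique (by rw [← pow_two]; exact hsq) habs_psd.nonneg).symm
  have htn : traceNorm C = (CFC.sqrt (Cᴴ * C)).trace.re := by
    have h0 : (0 : Mat n) ≤ Cᴴ * C := (posSemidef_conjTranspose_mul_self C).nonneg
    rw [CFC.sqrt_eq_cfc, cfc_nnreal_eq_real _ (Cᴴ * C) h0,
      (posSemidef_conjTranspose_mul_self C).1.cfc_eq]
    unfold traceNorm IsHermitian.cfc
    rw [Unitary.conjStarAlgAut_apply]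
    congr 5
    funext i
    rw [Function.comp_apply, Function.comp_apply, Real.sqrt.eq_1]
    rfl
  constructor
  · rw [htn, ← hsqrt, fc_trace hC]
    have h2 : fc sgn C * C = fc (fun x => ((|x| : ℝ) : ℂ)) C := by
      nth_rewrite 2 [← fc_id hC]
      rw [fc_mul hC]
      exact fc_congr hC fun i => sgn_mul_id _
    rw [h2, fc_trace hC]
  · rw [fc_conjT hC, fc_mul hC]
    rw [show (fun x => star (sgn x) * sgn x) = (fun _ : ℝ => (1:ℂ)) from funext sgn_mul_self,
      fc_one hC]

lemma traceNorm_factor_le (A B : Mat n) :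
    traceNorm (A * Aᴴ - B * Bᴴ) ≤ (hsNorm A + hsNorm B) * hsNorm (A - B) := by
  set C : Mat n := A * Aᴴ - B * Bᴴ with hCdef
  have hC : C.IsHermitian := by
    show Cᴴ = C
    simp [hCdef, Matrix.conjTranspose_sub, Matrix.conjTranspose_mul]
  obtain ⟨htn, hunit⟩ := traceNorm_herm hC
  set M : Mat n := fc sgn C with hM
  have hdecomp : M * C = (M * A) * (A - B)ᴴ + (M * (A - B)) * Bᴴ := by
    rw [hCdef, Matrix.conjTranspose_sub]
    noncomm_ring
  have htr : (M * C).trace = hsInner (A - B) (M * A) + hsInner B (M * (A - B)) := by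
    rw [hdecomp, Matrix.trace_add, trace_mul_conjT_eq_hsInner, trace_mul_conjT_eq_hsInner]
  have hre : traceNorm C ≤ ‖(M * C).trace‖ := by
    rw [htn]
    exact Complex.re_le_norm _
  calc traceNorm C ≤ ‖(M * C).trace‖ := hre
    _ ≤ ‖hsInner (A - B) (M * A)‖ + ‖hsInner B (M * (A - B))‖ := by
        rw [htr]; exact norm_add_le _ _
    _ ≤ hsNorm (A - B) * hsNorm (M * A) + hsNorm B * hsNorm (M * (A - B)) := by
        gcongr <;> exact norm_hsInner_le _ _
    _ = hsNorm (A - B) * hsNorm A + hsNorm B * hsNorm (A - B) := by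
        rw [hsNorm_isometry hunit, hsNorm_isometry hunit]
    _ = (hsNorm A + hsNorm B) * hsNorm (A - B) := by ring


lemma hsInner_conj (x y : Mat n) : hsInner xᴴ yᴴ = hsInner y x := by
  unfold hsInner
  rw [Matrix.conjTranspose_conjTranspose, Matrix.trace_mul_comm]

lemma hsInner_conjT_right (a b : Mat n) : hsInner a bᴴ = hsInner b aᴴ := by
  unfold hsInner
  rw [show aᴴ * bᴴ = (b * a)ᴴ from (Matrix.conjTranspose_mul b a).symm,
      show bᴴ * aᴴ = (a * b)ᴴ from (Matrix.conjTranspose_mul a b).symm,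
      Matrix.trace_conjTranspose, Matrix.trace_conjTranspose, Matrix.trace_mul_comm]

lemma one_hsInner (y : Mat n) : hsInner 1 y = y.trace := by
  simp [hsInner]

lemma hsInner_sub_right (w a b : Mat n) :
    hsInner w (a - b) = hsInner w a - hsInner w b := by
  simp [hsInner, Matrix.mul_sub]

lemma eq_zero_of_hsInner_self {z : Mat n} (h : hsInner z z = 0) : z = 0 := by
  rw [hsInner_eq_inner, inner_self_eq_zero] at h
  ext i j
  have := congrArg (fun v => v (i, j)) h
  simpa [toE] using this

section CondExp

variable {N : StarSubalgebra ℂ (Mat n)} {E : Mat n →ₗ[ℂ] Mat n} (hE : IsCondExp N E)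

include hE

lemma hsInner_E_right {w : Mat n} (hw : w ∈ N) (x : Mat n) :
    hsInner w (E x) = hsInner w x := by
  have h := hE.2.2 w x
  rw [hE.2.1 w hw] at h
  exact h.symm

lemma E_star (x : Mat n) : E xᴴ = (E x)ᴴ := by
  have hFm : (E xᴴ)ᴴ ∈ N := by
    have := N.star_mem' (hE.1 xᴴ)
    rwa [Matrix.star_eq_conjTranspose] at this
  have hz : E x - (E xᴴ)ᴴ ∈ N := sub_mem (hE.1 x) hFm
  have hF : ∀ w : Mat n, w ∈ N → hsInner w ((E xᴴ)ᴴ) = hsInner w x := by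
    intro w hw
    rw [hsInner_conjT_right w (E xᴴ), hE.2.2 xᴴ wᴴ]
    have hwH : wᴴ ∈ N := by
      have := N.star_mem' hw
      rwa [Matrix.star_eq_conjTranspose] at this
    rw [hE.2.1 _ hwH]
    exact hsInner_conj x w
  have hzz : hsInner (E x - (E xᴴ)ᴴ) (E x - (E xᴴ)ᴴ) = 0 := by
    rw [hsInner_sub_right, hsInner_E_right hE hz x, hF _ hz, sub_self]
  have h0 := eq_zero_of_hsInner_self hzz
  have hxF : E x = (E xᴴ)ᴴ := by
    have := sub_eq_zero.mp h0
    exact this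
  rw [hxF, Matrix.conjTranspose_conjTranspose]

lemma E_trace (x : Mat n) : (E x).trace = x.trace := by
  rw [← one_hsInner, ← one_hsInner]
  have h := hE.2.2 1 x
  rw [hE.2.1 1 (one_mem N)] at h
  exact h.symm

lemma E_trace_mul (x a : Mat n) (ha : a ∈ N) : ((E x) * a).trace = (x * a).trace := by
  have h1 : ∀ u : Mat n, (u * a).trace = hsInner uᴴ a := by
    intro u
    unfold hsInner
    rw [Matrix.conjTranspose_conjTranspose]
  rw [h1, h1, ← E_star hE, hE.2.2 xᴴ a, hE.2.1 a ha]

lemma E_isHermitian {x : Mat n} (hx : x.IsHermitian) : (E x).IsHermitian := by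
  show (E x)ᴴ = E x
  rw [← E_star hE, hx.eq]

end CondExp

lemma trace_mul_diagonal (M : Mat n) (d : Fin n → ℂ) :
    (M * Matrix.diagonal d).trace = ∑ j, M j j * d j := by
  simp [Matrix.trace, Matrix.diag, Matrix.mul_diagonal]

lemma quad_diag_entry (x C : Mat n) (j : Fin n) :
    (star C * x * C) j j = star (fun k => C k j) ⬝ᵥ (x *ᵥ fun k => C k j) := by
  simp only [Matrix.star_eq_conjTranspose, Matrix.mul_apply, Matrix.conjTranspose_apply,
    dotProduct, Matrix.mulVec, Pi.star_apply, Finset.sum_mul, Finset.mul_sum]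
  rw [Finset.sum_comm]
  exact Finset.sum_congr rfl fun l _ => Finset.sum_congr rfl fun k _ => by ring

lemma col_ne_zero {A : Mat n} (h : A.IsHermitian) (j : Fin n) :
    (fun k => (h.eigenvectorUnitary : Mat n) k j) ≠ 0 := by
  intro hc
  have h1 := congrFun (congrFun (star_mul_U h) j) j
  rw [Matrix.mul_apply] at h1
  simp only [Matrix.one_apply_eq] at h1
  have : ∀ k, star (h.eigenvectorUnitary : Mat n) j k * (h.eigenvectorUnitary : Mat n) k j = 0 := by
    intro k
    have := congrFun hc k
    simp only [Pi.zero_apply] at this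
    rw [this, mul_zero]
  rw [Finset.sum_eq_zero fun k _ => this k] at h1
  exact zero_ne_one h1

theorem E_posDef {N : StarSubalgebra ℂ (Mat n)} {E : Mat n →ₗ[ℂ] Mat n} (hE : IsCondExp N E)
    {x : Mat n} (hx : x.PosDef) : (E x).PosDef := by
  classical
  have hEN : E x ∈ N := hE.1 x
  have hh : (E x).IsHermitian := E_isHermitian hE hx.1
  apply posDef_of_eigenvalues_pos hh
  intro i
  by_contra hle
  push_neg at hle
  set g : ℝ → ℂ := fun y => if y = hh.eigenvalues i then 1 else 0 with hg
  set p : Mat n := fc g (E x) with hp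
  have hpN : p ∈ N := fc_mem hh hEN g
  -- trace of (E x) * p
  have htr1 : ((E x) * p).trace = ∑ j, (hh.eigenvalues j : ℂ) * g (hh.eigenvalues j) := by
    conv_lhs => rw [← fc_id hh]
    rw [hp, fc_mul hh, fc_trace hh]
  have hle1 : ((E x) * p).trace ≤ 0 := by
    rw [htr1]
    apply Finset.sum_nonpos
    intro j _
    rw [hg]
    simp only []
    by_cases hj : hh.eigenvalues j = hh.eigenvalues i
    · rw [if_pos hj, mul_one, hj]
      exact_mod_cast hle
    · rw [if_neg hj, mul_zero]
  -- trace of x * p is positive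
  set U : Mat n := (hh.eigenvectorUnitary : Mat n) with hU
  have htr2 : (x * p).trace = ∑ j, (star U * x * U) j j * g (hh.eigenvalues j) := by
    rw [hp, fc_def hh]
    rw [show x * (U * Matrix.diagonal (fun i => g (hh.eigenvalues i)) * star U)
        = (x * U * Matrix.diagonal (fun i => g (hh.eigenvalues i))) * star U by
      simp [Matrix.mul_assoc]]
    rw [Matrix.trace_mul_comm, ← Matrix.mul_assoc, ← Matrix.mul_assoc, trace_mul_diagonal]
  have hQpos : ∀ j, 0 ≤ (star U * x * U) j j ∧ 0 < (star U * x * U) j j := by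
    intro j
    rw [quad_diag_entry]
    constructor
    · exact hx.posSemidef.dotProduct_mulVec_nonneg _
    · exact hx.dotProduct_mulVec_pos (col_ne_zero hh j)
  have hpos : 0 < (x * p).trace := by
    rw [htr2]
    apply Finset.sum_pos'
    · intro j _
      by_cases hj : hh.eigenvalues j = hh.eigenvalues i
      · rw [hg]; simp only [if_pos hj, mul_one]
        exact (hQpos j).1
      · rw [hg]; simp only [if_neg hj, mul_zero]; exact le_rfl
    · refine ⟨i, Finset.mem_univ i, ?_⟩
      have hgi : g (hh.eigenvalues i) = 1 := by rw [hg]; simp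
      rw [hgi, mul_one]
      exact (hQpos i).2
  have heq := E_trace_mul hE x p hpN
  rw [heq] at hle1
  exact absurd (lt_of_lt_of_le hpos hle1) (lt_irrefl 0)


lemma mpow_collapse {A : Mat n} (hA : A.PosDef) {z w x : ℂ} (h : z + w = x) (X : Mat n) :
    mpow A z * (mpow A w * X) = mpow A x * X := by
  rw [← Matrix.mul_assoc, ← mpow_add hA, h]

lemma mpow_collapse2 {A : Mat n} (hA : A.PosDef) {z w x : ℂ} (h : z + w = x) :
    mpow A z * mpow A w = mpow A x := by
  rw [← mpow_add hA, h]

lemma mpow_cancelL {A : Mat n} (hA : A.PosDef) {z w : ℂ} (h : z + w = 0) (X : Mat n) :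
    mpow A z * (mpow A w * X) = X := by
  rw [mpow_collapse hA h, mpow_zero hA.1, Matrix.one_mul]

lemma mpow_cancel2 {A : Mat n} (hA : A.PosDef) {z w : ℂ} (h : z + w = 0) :
    mpow A z * mpow A w = 1 := by
  rw [mpow_collapse2 hA h, mpow_zero hA.1]

lemma base_collapse {A : Mat n} (hA : A.PosDef) {w x : ℂ} (h : 1 + w = x) (X : Mat n) :
    A * (mpow A w * X) = mpow A x * X := by
  nth_rewrite 1 [← mpow_one hA.1]
  exact mpow_collapse hA h X

lemma base_cancelL {A : Mat n} (hA : A.PosDef) (X : Mat n) :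
    A * (mpow A (-1) * X) = X := by
  rw [base_collapse hA (show (1:ℂ) + -1 = 0 by norm_num) X, mpow_zero hA.1, Matrix.one_mul]

lemma mpow_mem {A : Mat n} (hA : A.IsHermitian) {S : StarSubalgebra ℂ (Mat n)}
    (hAS : A ∈ S) (z : ℂ) : mpow A z ∈ S := by
  rw [mpow_eq_fc]
  exact fc_mem hA hAS _


/-- Lemma 3.19: with `ω_N` a faithful state of `N` and
`ω := R_ρ(ω_N) = ρ^{1/2} ρ_N^{−1/2} ω_N ρ_N^{−1/2} ρ^{1/2}`, one has
`‖ρ − R_σ^{−t}(ρ_N)‖₁ ≤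
  2 ‖ρ^{1/2} − σ^{1/2+it} σ_N^{−1/2−it} ρ_N^{1/2} ω_N^{1/2+it} ρ_N^{−1/2} ρ^{1/2} ω^{−1/2−it}‖₂`. -/
theorem stmt14 (n : ℕ) (N : StarSubalgebra ℂ (Mat n)) (E : Mat n →ₗ[ℂ] Mat n)
    (hE : IsCondExp N E)
    (ρ σ : Mat n) (hρ : ρ.PosDef) (hρ1 : ρ.trace = 1) (hσ : σ.PosDef) (hσ1 : σ.trace = 1)
    (t : ℝ)
    (ωN : Mat n) (hωN : ωN ∈ N) (hωN' : ωN.PosDef) (hωN1 : ωN.trace = 1)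
    (ω : Mat n)
    (hω : ω = mpow ρ (1/2) * mpow (E ρ) (-(1/2)) * ωN * mpow (E ρ) (-(1/2)) * mpow ρ (1/2)) :
    traceNorm (ρ - rotPetz σ (E σ) (-t) (E ρ)) ≤
      2 * hsNorm (mpow ρ (1/2) -
        mpow σ (1/2 + Complex.I * t) * mpow (E σ) (-(1/2) - Complex.I * t) *
          mpow (E ρ) (1/2) * mpow ωN (1/2 + Complex.I * t) * mpow (E ρ) (-(1/2)) *
          mpow ρ (1/2) * mpow ω (-(1/2) - Complex.I * t)) := by
  classical
  have hρN : (E ρ).PosDef := E_posDef hE hρ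
  have hσN : (E σ).PosDef := E_posDef hE hσ
  have hρNm : E ρ ∈ N := hE.1 ρ
  have hσNm : E σ ∈ N := hE.1 σ
  -- star arithmetic
  have star_half : star ((1:ℂ)/2) = 1/2 := by simp
  have star_neg_half : star (-((1:ℂ)/2)) = -(1/2) := by simp
  have star_u : star ((1:ℂ)/2 + Complex.I * (t:ℂ)) = 1/2 - Complex.I * t := by
    simp [Complex.ext_iff]
  have star_neg_u : star (-((1:ℂ)/2) - Complex.I * (t:ℂ)) = -(1/2) + Complex.I * t := by
    simp [Complex.ext_iff]
  -- ω is positive definite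
  have hCH : (mpow ρ (1/2) * mpow (E ρ) (-(1/2)))ᴴ = mpow (E ρ) (-(1/2)) * mpow ρ (1/2) := by
    rw [Matrix.conjTranspose_mul, mpow_conjT hρ, mpow_conjT hρN, star_half, star_neg_half]
  have hω' : ω.PosDef := by
    have h1 : ω = (mpow ρ (1/2) * mpow (E ρ) (-(1/2))) * ωN *
        (mpow ρ (1/2) * mpow (E ρ) (-(1/2)))ᴴ := by
      rw [hω, hCH]
      simp only [Matrix.mul_assoc]
    rw [h1]
    exact posDef_conj hωN' ((isUnit_mpow hρ _).mul (isUnit_mpow hρN _))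
  -- abbreviation
  set B : Mat n := mpow σ (1/2 + Complex.I * t) * mpow (E σ) (-(1/2) - Complex.I * t) *
      mpow (E ρ) (1/2) * mpow ωN (1/2 + Complex.I * t) * mpow (E ρ) (-(1/2)) *
      mpow ρ (1/2) * mpow ω (-(1/2) - Complex.I * t) with hB
  -- key fact 1: ρ = A Aᴴ
  have hAH : (mpow ρ (1/2))ᴴ = mpow ρ (1/2) := by rw [mpow_conjT hρ, star_half]
  have key1 : mpow ρ (1/2) * (mpow ρ (1/2))ᴴ = ρ := by
    rw [hAH, mpow_collapse2 hρ (show (1:ℂ)/2 + 1/2 = 1 by norm_num), mpow_one hρ.1]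
  -- Bᴴ
  have hBH : Bᴴ = mpow ω (-(1/2) + Complex.I * t) * (mpow ρ (1/2) * (mpow (E ρ) (-(1/2)) *
      (mpow ωN (1/2 - Complex.I * t) * (mpow (E ρ) (1/2) *
      (mpow (E σ) (-(1/2) + Complex.I * t) * mpow σ (1/2 - Complex.I * t)))))) := by
    rw [hB]
    simp only [Matrix.conjTranspose_mul, mpow_conjT hρ, mpow_conjT hσ, mpow_conjT hρN,
      mpow_conjT hσN, mpow_conjT hωN', mpow_conjT hω', star_half, star_neg_half, star_u,
      star_neg_u, Matrix.mul_assoc]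
  -- inverse of ω
  have hωinv : mpow ω (-1) = mpow ρ (-(1/2)) * (mpow (E ρ) (1/2) * (mpow ωN (-1) *
      (mpow (E ρ) (1/2) * mpow ρ (-(1/2))))) := by
    rw [mpow_neg_one hω']
    apply Matrix.inv_eq_right_inv
    rw [hω]
    simp only [Matrix.mul_assoc]
    rw [mpow_cancelL hρ (show (1:ℂ)/2 + -(1/2) = 0 by norm_num),
        mpow_cancelL hρN (show -((1:ℂ)/2) + 1/2 = 0 by norm_num),
        base_cancelL hωN',
        mpow_cancelL hρN (show -((1:ℂ)/2) + 1/2 = 0 by norm_num),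
        mpow_cancel2 hρ (show (1:ℂ)/2 + -(1/2) = 0 by norm_num)]
  -- key fact 2: B Bᴴ = rotated Petz recovery
  have key2 : B * Bᴴ = rotPetz σ (E σ) (-t) (E ρ) := by
    rw [hBH, hB]
    simp only [Matrix.mul_assoc]
    rw [mpow_collapse hω'
      (show (-((1:ℂ)/2) - Complex.I * t) + (-(1/2) + Complex.I * t) = -1 by ring)]
    rw [hωinv]
    simp only [Matrix.mul_assoc]
    rw [mpow_cancelL hρ (show (1:ℂ)/2 + -(1/2) = 0 by norm_num)]
    rw [mpow_cancelL hρN (show -((1:ℂ)/2) + 1/2 = 0 by norm_num)]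
    rw [mpow_collapse hωN'
      (show ((1:ℂ)/2 + Complex.I * t) + -1 = -(1/2) + Complex.I * t by ring)]
    rw [mpow_cancelL hρ (show -((1:ℂ)/2) + 1/2 = 0 by norm_num)]
    rw [mpow_cancelL hρN (show (1:ℂ)/2 + -(1/2) = 0 by norm_num)]
    rw [mpow_cancelL hωN'
      (show (-((1:ℂ)/2) + Complex.I * t) + (1/2 - Complex.I * t) = 0 by ring)]
    rw [mpow_collapse hρN (show (1:ℂ)/2 + 1/2 = 1 by norm_num), mpow_one hρN.1]
    simp only [rotPetz, Complex.ofReal_neg, Matrix.mul_assoc]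
    rw [show (1:ℂ)/2 - Complex.I * -(t:ℂ) = 1/2 + Complex.I * t by ring,
        show -((1:ℂ)/2) + Complex.I * -(t:ℂ) = -(1/2) - Complex.I * t by ring,
        show -((1:ℂ)/2) - Complex.I * -(t:ℂ) = -(1/2) + Complex.I * t by ring,
        show (1:ℂ)/2 + Complex.I * -(t:ℂ) = 1/2 - Complex.I * t by ring]
  -- trace of the rotated Petz recovery
  have htrace_rot : (rotPetz σ (E σ) (-t) (E ρ)).trace = 1 := by
    simp only [rotPetz, Complex.ofReal_neg]
    rw [Matrix.trace_mul_comm]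
    simp only [Matrix.mul_assoc]
    rw [mpow_collapse hσ
      (show ((1:ℂ)/2 + Complex.I * -(t:ℂ)) + (1/2 - Complex.I * -(t:ℂ)) = 1 by ring),
      mpow_one hσ.1]
    have hM : (mpow (E σ) (-(1/2) + Complex.I * -(t:ℂ)) * (E ρ *
        mpow (E σ) (-(1/2) - Complex.I * -(t:ℂ)))) ∈ N :=
      mul_mem (mpow_mem hσN.1 hσNm _) (mul_mem hρNm (mpow_mem hσN.1 hσNm _))
    rw [← E_trace_mul hE σ _ hM]
    rw [base_collapse hσN
      (show (1:ℂ) + (-(1/2) + Complex.I * -(t:ℂ)) = 1/2 + Complex.I * -(t:ℂ) by ring)]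
    rw [← Matrix.mul_assoc, Matrix.trace_mul_comm]
    rw [mpow_cancelL hσN
      (show (-((1:ℂ)/2) - Complex.I * -(t:ℂ)) + (1/2 + Complex.I * -(t:ℂ)) = 0 by ring)]
    rw [E_trace hE, hρ1]
  -- key fact 3: hsNorm of ρ^{1/2} is 1
  have key3 : hsNorm (mpow ρ (1/2)) = 1 := by
    unfold hsNorm
    rw [hAH, mpow_collapse2 hρ (show (1:ℂ)/2 + 1/2 = 1 by norm_num), mpow_one hρ.1, hρ1]
    simp
  -- key fact 4: hsNorm of B is 1
  have key4 : hsNorm B = 1 := by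
    unfold hsNorm
    rw [Matrix.trace_mul_comm, key2, htrace_rot]
    simp
  have hmain := traceNorm_factor_le (mpow ρ (1/2)) B
  rw [key1, key2, key3, key4] at hmain
  norm_num at hmain
  exact hmain


end QFDiv
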